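/- In any feasible price set: for p in K = {p ∈ ℝⁿ_{>0} : |p| = 1, p_max/p_min ≤ γψ̃}, the map f with f_j⁰(p) = |p|^{(1+2δ)/(1+δ)} (ψ_j P_j(p))^{1/(1+δ)} and f = f⁰/|f⁰| maps K into K, where |·| denotes geometric mean, P_j(p) = Σ_k C_{jk} p_k^{-δ}, ψ_j are the path-products with ψ_min = 1, ψ̃ = max_j ψ_j, and γ = max_i Σ_j C_{ij}. In particular f has a fixed point in K (by Brouwer), which satisfies detailed balance. -/

import Mathlib

open Finset

/-- `l` is a walk in the support graph of `C`. -/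
def isWalk {n : ℕ} (C : Matrix (Fin n) (Fin n) ℝ) (l : List (Fin n)) : Prop :=
  l.Chain' fun a b => 0 < C a b

private lemma rpow_le_rpow_cancel {e x y : ℝ} (he : 0 < e) (hx : 0 ≤ x) (hy : 0 ≤ y)
    (h : x ^ e ≤ y ^ e) : x ≤ y := by
  have := Real.rpow_le_rpow (Real.rpow_nonneg hx e) h (inv_nonneg.mpr he.le)
  rwa [← Real.rpow_mul hx, ← Real.rpow_mul hy, mul_inv_cancel₀ he.ne', Real.rpow_one,
    Real.rpow_one] at this

theorem fixed_point_map_preserves_K {n : ℕ} (hn : 2 ≤ n)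
    (C : Matrix (Fin n) (Fin n) ℝ) (δ : ℝ) (hδ : 0 < δ)
    (hCnn : ∀ i j, 0 ≤ C i j)
    (hCsupp : ∀ i j, 0 < C i j ↔ 0 < C j i)
    (hnorm : ∀ i, (∀ j, C i j ≠ 0 → 1 ≤ C i j) ∧ ∃ j, C i j = 1)
    (hconn : ∀ i j : Fin n, Relation.ReflTransGen (fun a b => 0 < C a b) i j)
    (hcirc : ∀ l : List (Fin n), l ≠ [] → isWalk C l → l.head? = l.getLast? →
      ((l.zip l.tail).map fun p => C p.1 p.2).prod
        = ((l.zip l.tail).map fun p => C p.2 p.1).prod)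
    -- the path-product weights ψ, with ψ_min = 1 and ψ_i C_ij = ψ_j C_ji
    (ψ : Fin n → ℝ) (hψ1 : ∀ j, 1 ≤ ψ j) (hψmin : ∃ j, ψ j = 1)
    (hψid : ∀ i j, ψ i * C i j = ψ j * C j i)
    (γ ψt : ℝ)
    (hγ : γ = Finset.univ.sup' ⟨(⟨0, by omega⟩ : Fin n), Finset.mem_univ _⟩
      fun i => ∑ j, C i j)
    (hψt : ψt = Finset.univ.sup' ⟨(⟨0, by omega⟩ : Fin n), Finset.mem_univ _⟩ ψ)
    -- geometric mean
    (gm : (Fin n → ℝ) → ℝ) (hgm : ∀ p, gm p = (∏ i, p i) ^ ((n : ℝ)⁻¹))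
    (P : Fin n → (Fin n → ℝ) → ℝ) (hP : ∀ j p, P j p = ∑ k, C j k / p k ^ δ)
    (K : Set (Fin n → ℝ))
    (hK : K = {p | (∀ i, 0 < p i) ∧ gm p = 1 ∧
      (Finset.univ.sup' ⟨(⟨0, by omega⟩ : Fin n), Finset.mem_univ _⟩ p) /
        (Finset.univ.inf' ⟨(⟨0, by omega⟩ : Fin n), Finset.mem_univ _⟩ p) ≤ γ * ψt})
    (f0 : (Fin n → ℝ) → Fin n → ℝ)
    (hf0 : ∀ p j, f0 p j = gm p ^ ((1 + 2 * δ) / (1 + δ)) * (ψ j * P j p) ^ (1 / (1 + δ)))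
    (f : (Fin n → ℝ) → Fin n → ℝ)
    (hf : ∀ p j, f p j = f0 p j / gm (f0 p)) :
    Set.MapsTo f K K ∧
    ∃ p ∈ K, f p = p ∧
      ∀ i j, p i ^ (1 + δ) * C i j / P i p = p j ^ (1 + δ) * C j i / P j p := by
  have hne : (Finset.univ : Finset (Fin n)).Nonempty := ⟨⟨0, by omega⟩, Finset.mem_univ _⟩
  have h1δ : (0:ℝ) < 1 + δ := by linarith
  have hncast : (0:ℝ) < (n:ℝ) := by
    have : 0 < n := by omega
    exact_mod_cast this
  -- basic constants
  have hγ1 : 1 ≤ γ := by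
    obtain ⟨k, hk⟩ := (hnorm ⟨0, by omega⟩).2
    have h1 : (1:ℝ) ≤ ∑ j, C ⟨0, by omega⟩ j := by
      rw [← hk]
      exact Finset.single_le_sum (fun j _ => hCnn _ j) (Finset.mem_univ k)
    refine h1.trans ?_
    rw [hγ]
    exact Finset.le_sup' (fun i => ∑ j, C i j) (Finset.mem_univ _)
  have hψt1 : 1 ≤ ψt := by
    refine (hψ1 ⟨0, by omega⟩).trans ?_
    rw [hψt]
    exact Finset.le_sup' ψ (Finset.mem_univ _)
  have hB0 : 0 < γ * ψt := by nlinarith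
  have hB1 : 1 ≤ γ * ψt := by nlinarith
  -- positivity of P
  have hPpos : ∀ (q : Fin n → ℝ), (∀ i, 0 < q i) → ∀ j, 0 < P j q := by
    intro q hq j
    rw [hP]
    obtain ⟨k, hk⟩ := (hnorm j).2
    refine Finset.sum_pos' (fun i _ => div_nonneg (hCnn j i) (Real.rpow_nonneg (hq i).le δ))
      ⟨k, Finset.mem_univ k, ?_⟩
    rw [hk]
    exact div_pos one_pos (Real.rpow_pos_of_pos (hq k) δ)
  -- geometric mean of a scalar multiple
  have hgm_mul : ∀ (c : ℝ), 0 ≤ c → ∀ q : Fin n → ℝ, (∀ i, 0 ≤ q i) →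
      gm (fun i => c * q i) = c * gm q := by
    intro c hc q hq
    rw [hgm, hgm, Finset.prod_mul_distrib, Finset.prod_const, Finset.card_univ,
      Fintype.card_fin,
      Real.mul_rpow (pow_nonneg hc n) (Finset.prod_nonneg fun i _ => hq i),
      ← Real.rpow_natCast c n, ← Real.rpow_mul hc,
      mul_inv_cancel₀ (by exact_mod_cast hncast.ne' : (n:ℝ) ≠ 0), Real.rpow_one]
  have hgm_pos : ∀ q : Fin n → ℝ, (∀ i, 0 < q i) → 0 < gm q := by
    intro q hq
    rw [hgm]
    exact Real.rpow_pos_of_pos (Finset.prod_pos fun i _ => hq i) _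
  -- lower bound
  have hlow : ∀ (q : Fin n → ℝ), (∀ i, 0 < q i) → ∀ j,
      (Finset.univ.sup' hne q) ^ (-δ) ≤ ψ j * P j q := by
    intro q hq j
    obtain ⟨k, hk⟩ := (hnorm j).2
    have h1 : (Finset.univ.sup' hne q) ^ (-δ) ≤ q k ^ (-δ) :=
      Real.rpow_le_rpow_of_nonpos (hq k) (Finset.le_sup' q (Finset.mem_univ k))
        (by linarith)
    have h2 : q k ^ (-δ) = C j k / q k ^ δ := by
      rw [hk, Real.rpow_neg (hq k).le, one_div]
    have h3 : C j k / q k ^ δ ≤ P j q := by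
      rw [hP]
      exact Finset.single_le_sum
        (fun i _ => div_nonneg (hCnn j i) (Real.rpow_nonneg (hq i).le δ))
        (Finset.mem_univ k)
    have h4 : P j q ≤ ψ j * P j q :=
      le_mul_of_one_le_left (hPpos q hq j).le (hψ1 j)
    linarith [h1, h2 ▸ h1]
  -- upper bound
  have hinfpos : ∀ (q : Fin n → ℝ), (∀ i, 0 < q i) → 0 < Finset.univ.inf' hne q := by
    intro q hq
    obtain ⟨b, _, hb⟩ := Finset.exists_mem_eq_inf' hne q
    rw [hb]; exact hq b
  have hsuppos : ∀ (q : Fin n → ℝ), (∀ i, 0 < q i) → 0 < Finset.univ.sup' hne q := by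
    intro q hq
    exact lt_of_lt_of_le (hinfpos q hq)
      ((Finset.inf'_le q (Finset.mem_univ ⟨0, by omega⟩)).trans
        (Finset.le_sup' q (Finset.mem_univ _)))
  have hhigh : ∀ (q : Fin n → ℝ), (∀ i, 0 < q i) → ∀ j,
      ψ j * P j q ≤ γ * ψt * (Finset.univ.inf' hne q) ^ (-δ) := by
    intro q hq j
    have hiq : 0 < Finset.univ.inf' hne q := hinfpos q hq
    have hPle : P j q ≤ γ * (Finset.univ.inf' hne q) ^ (-δ) := by
      rw [hP]
      have hstep : ∀ k : Fin n, C j k / q k ^ δ ≤ C j k * (Finset.univ.inf' hne q) ^ (-δ) := by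
        intro k
        have hmono : q k ^ (-δ) ≤ (Finset.univ.inf' hne q) ^ (-δ) :=
          Real.rpow_le_rpow_of_nonpos hiq (Finset.inf'_le q (Finset.mem_univ k)) (by linarith)
        have : C j k / q k ^ δ = C j k * q k ^ (-δ) := by
          rw [Real.rpow_neg (hq k).le, div_eq_mul_inv]
        rw [this]
        exact mul_le_mul_of_nonneg_left hmono (hCnn j k)
      calc ∑ k, C j k / q k ^ δ ≤ ∑ k, C j k * (Finset.univ.inf' hne q) ^ (-δ) :=
            Finset.sum_le_sum fun k _ => hstep k
        _ = (∑ k, C j k) * (Finset.univ.inf' hne q) ^ (-δ) := by rw [← Finset.sum_mul]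
        _ ≤ γ * (Finset.univ.inf' hne q) ^ (-δ) := by
            refine mul_le_mul_of_nonneg_right ?_ (Real.rpow_nonneg hiq.le _)
            rw [hγ]
            exact Finset.le_sup' (fun i => ∑ j, C i j) (Finset.mem_univ j)
    have hψj : ψ j ≤ ψt := by
      rw [hψt]; exact Finset.le_sup' ψ (Finset.mem_univ j)
    calc ψ j * P j q ≤ ψt * (γ * (Finset.univ.inf' hne q) ^ (-δ)) :=
          mul_le_mul hψj hPle (hPpos q hq j).le (by linarith)
      _ = γ * ψt * (Finset.univ.inf' hne q) ^ (-δ) := by ring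
  -- core ratio estimate
  have hratio_core : ∀ (q r : Fin n → ℝ) (c : ℝ), 0 < c → (∀ i, 0 < r i) → (∀ i, 0 < q i) →
      (∀ j, q j ^ (1 + δ) = c * (ψ j * P j r)) →
      (Finset.univ.sup' hne q / Finset.univ.inf' hne q) ^ (1 + δ) ≤
        (γ * ψt) * (Finset.univ.sup' hne r / Finset.univ.inf' hne r) ^ δ := by
    intro q r c hc hr hqpos hqe
    obtain ⟨a, _, ha⟩ := Finset.exists_mem_eq_sup' hne q
    obtain ⟨b, _, hb⟩ := Finset.exists_mem_eq_inf' hne q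
    have hsR : 0 < Finset.univ.sup' hne r := hsuppos r hr
    have hiR : 0 < Finset.univ.inf' hne r := hinfpos r hr
    have h1 : q a ^ (1 + δ) ≤ c * (γ * ψt * (Finset.univ.inf' hne r) ^ (-δ)) := by
      rw [hqe a]; exact mul_le_mul_of_nonneg_left (hhigh r hr a) hc.le
    have h2 : c * (Finset.univ.sup' hne r) ^ (-δ) ≤ q b ^ (1 + δ) := by
      rw [hqe b]
      refine mul_le_mul_of_nonneg_left ?_ hc.le
      exact hlow r hr b
    rw [ha, hb]
    have hd : (q a / q b) ^ (1 + δ) = q a ^ (1 + δ) / q b ^ (1 + δ) :=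
      Real.div_rpow (hqpos a).le (hqpos b).le (1 + δ)
    rw [hd]
    have hden : 0 < c * (Finset.univ.sup' hne r) ^ (-δ) :=
      mul_pos hc (Real.rpow_pos_of_pos hsR _)
    calc q a ^ (1 + δ) / q b ^ (1 + δ)
        ≤ (c * (γ * ψt * (Finset.univ.inf' hne r) ^ (-δ))) /
            (c * (Finset.univ.sup' hne r) ^ (-δ)) :=
          div_le_div₀ (by positivity) h1 hden h2
      _ = (γ * ψt) * (Finset.univ.sup' hne r / Finset.univ.inf' hne r) ^ δ := by
          rw [Real.div_rpow hsR.le hiR.le, Real.rpow_neg hiR.le, Real.rpow_neg hsR.le]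
          have e1 : (Finset.univ.inf' hne r) ^ δ ≠ 0 := (Real.rpow_pos_of_pos hiR δ).ne'
          have e2 : (Finset.univ.sup' hne r) ^ δ ≠ 0 := (Real.rpow_pos_of_pos hsR δ).ne'
          field_simp
  -- Part A: MapsTo
  have partA : Set.MapsTo f K K := by
    intro p hp
    rw [hK] at hp
    obtain ⟨hppos, hpgm, hpr⟩ := hp
    have hfactor : ∀ j, f0 p j = (ψ j * P j p) ^ (1 / (1 + δ)) := by
      intro j
      rw [hf0, hpgm, Real.one_rpow, one_mul]
    have hψP : ∀ j, 0 < ψ j * P j p := fun j =>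
      mul_pos (lt_of_lt_of_le one_pos (hψ1 j)) (hPpos p hppos j)
    have hf0pos : ∀ j, 0 < f0 p j := fun j => by
      rw [hfactor]
      exact Real.rpow_pos_of_pos (hψP j) _
    have hcg : 0 < gm (f0 p) := hgm_pos _ hf0pos
    have hfppos : ∀ i, 0 < f p i := fun i => by
      rw [hf]; exact div_pos (hf0pos i) hcg
    have hfeq : f p = fun j => (gm (f0 p))⁻¹ * f0 p j := by
      funext j; rw [hf]; ring
    have hfgm : gm (f p) = 1 := by
      rw [hfeq, hgm_mul _ (inv_nonneg.mpr hcg.le) _ (fun i => (hf0pos i).le),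
        inv_mul_cancel₀ hcg.ne']
    have hpow : ∀ j, f0 p j ^ (1 + δ) = 1 * (ψ j * P j p) := by
      intro j
      rw [hfactor, ← Real.rpow_mul (hψP j).le, one_div, inv_mul_cancel₀ h1δ.ne',
        Real.rpow_one, one_mul]
    have hcore := hratio_core (f0 p) p 1 one_pos hppos hf0pos hpow
    have hips : 0 < Finset.univ.inf' hne p := hinfpos p hppos
    have hsps : 0 < Finset.univ.sup' hne p := hsuppos p hppos
    have h5 : (Finset.univ.sup' hne p / Finset.univ.inf' hne p) ^ δ ≤ (γ * ψt) ^ δ :=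
      Real.rpow_le_rpow (div_nonneg hsps.le hips.le) hpr hδ.le
    have h6 : (Finset.univ.sup' hne (f0 p) / Finset.univ.inf' hne (f0 p)) ^ (1 + δ)
        ≤ (γ * ψt) ^ (1 + δ) := by
      calc (Finset.univ.sup' hne (f0 p) / Finset.univ.inf' hne (f0 p)) ^ (1 + δ)
          ≤ (γ * ψt) * ((Finset.univ.sup' hne p / Finset.univ.inf' hne p) ^ δ) := hcore
        _ ≤ (γ * ψt) * (γ * ψt) ^ δ := mul_le_mul_of_nonneg_left h5 hB0.le
        _ = (γ * ψt) ^ (1 + δ) := by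
            rw [Real.rpow_add hB0, Real.rpow_one]
    have h7 : Finset.univ.sup' hne (f0 p) / Finset.univ.inf' hne (f0 p) ≤ γ * ψt :=
      rpow_le_rpow_cancel h1δ
        (div_nonneg (hsuppos _ hf0pos).le (hinfpos _ hf0pos).le) hB0.le h6
    have hsupeq : Finset.univ.sup' hne (f p) = Finset.univ.sup' hne (f0 p) / gm (f0 p) := by
      have hcomp : f p = (fun x => x / gm (f0 p)) ∘ (f0 p) := by
        funext j; rw [hf]; rfl
      rw [hcomp]
      exact (Finset.comp_sup'_eq_sup'_comp hne (fun x => x / gm (f0 p))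
        (fun x y => by
          exact (max_div_div_right hcg.le x y).symm)).symm
    have hinfeq : Finset.univ.inf' hne (f p) = Finset.univ.inf' hne (f0 p) / gm (f0 p) := by
      have hcomp : f p = (fun x => x / gm (f0 p)) ∘ (f0 p) := by
        funext j; rw [hf]; rfl
      rw [hcomp]
      exact (Finset.apply_inf'_eq_inf'_comp hne (fun x => x / gm (f0 p))
        (fun x y => by
          exact (min_div_div_right hcg.le x y).symm)).symm
    rw [hK]
    refine ⟨hfppos, hfgm, ?_⟩
    show Finset.univ.sup' hne (f p) / Finset.univ.inf' hne (f p) ≤ γ * ψt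
    rw [hsupeq, hinfeq, div_div_div_comm, div_self hcg.ne', div_one]
    exact h7
  refine ⟨partA, ?_⟩
  -- Part B: construct a fixed point variationally
  classical
  set S : Fin n → Fin n → ℝ := fun j k => ψ j * C j k with hS
  have hSsymm : ∀ j k, S j k = S k j := fun j k => hψid j k
  have hS0 : ∀ j k, 0 ≤ S j k := fun j k =>
    mul_nonneg (by linarith [hψ1 j]) (hCnn j k)
  have hSrow : ∀ j, ∃ k, 1 ≤ S j k := by
    intro j
    obtain ⟨k, hk⟩ := (hnorm j).2
    exact ⟨k, by simp [hS, hk, hψ1 j]⟩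
  set e : ℝ := -δ⁻¹ with he
  have he0 : e < 0 := by rw [he]; exact neg_lt_zero.mpr (inv_pos.mpr hδ)
  set φc : (Fin n → ℝ) → ℝ := fun u => ∑ j, u j ^ e with hφc
  set Q : (Fin n → ℝ) → ℝ := fun u => ∑ j, ∑ k, S j k * (u j * u k) with hQdef
  set Qbar : ℝ := ∑ j, ∑ k, S j k with hQbar
  set lo : ℝ := (n : ℝ) ^ (-δ) with hlo
  have hlopos : 0 < lo := Real.rpow_pos_of_pos hncast _
  -- from positivity and the constraint, coordinates are ≥ lo
  have hconstr_lo : ∀ u : Fin n → ℝ, (∀ j, 0 < u j) → φc u = (n : ℝ) → ∀ j, lo ≤ u j := by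
    intro u hu hsum j
    have h1 : u j ^ e ≤ (n : ℝ) := by
      rw [← hsum]
      exact Finset.single_le_sum
        (fun i _ => (Real.rpow_nonneg (hu i).le e)) (Finset.mem_univ j)
    have h2 : (n : ℝ) ^ (-δ) ≤ (u j ^ e) ^ (-δ) :=
      Real.rpow_le_rpow_of_nonpos (Real.rpow_pos_of_pos (hu j) e) h1 (by linarith)
    have h3 : (u j ^ e) ^ (-δ) = u j := by
      rw [← Real.rpow_mul (hu j).le]
      have : e * (-δ) = 1 := by
        rw [he]; field_simp
      rw [this, Real.rpow_one]
    rw [h3] at h2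
    exact h2
  -- Q is continuous
  have hQcont : Continuous Q := by
    apply continuous_finset_sum
    intro j _
    apply continuous_finset_sum
    intro k _
    exact continuous_const.mul ((continuous_apply j).mul (continuous_apply k))
  -- the compact set A
  set B : Set (Fin n → ℝ) := {u | ∀ j, lo ≤ u j} with hBdef
  have hBclosed : IsClosed B := by
    have : B = ⋂ j, {u : Fin n → ℝ | lo ≤ u j} := by
      ext u; simp [hBdef, Set.mem_iInter]
    rw [this]
    exact isClosed_iInter fun j => isClosed_le continuous_const (continuous_apply j)
  have hφcont : ContinuousOn φc B := by
    apply continuousOn_finset_sum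
    intro j _
    exact (continuous_apply j).continuousOn.rpow_const
      (fun u hu => Or.inl (ne_of_gt (lt_of_lt_of_le hlopos (hu j))))
  set A : Set (Fin n → ℝ) := (B ∩ φc ⁻¹' {(n : ℝ)}) ∩ Q ⁻¹' (Set.Iic Qbar) with hAdef
  have hAclosed : IsClosed A :=
    (hφcont.preimage_isClosed_of_isClosed hBclosed isClosed_singleton).inter
      (isClosed_Iic.preimage hQcont)
  have hAsub : A ⊆ Set.Icc (fun _ => lo) (fun _ => Qbar * (n : ℝ) ^ δ) := by
    rintro u ⟨⟨huB, huφ⟩, huQ⟩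
    have hupos : ∀ j, 0 < u j := fun j => lt_of_lt_of_le hlopos (huB j)
    refine ⟨fun j => huB j, fun j => ?_⟩
    obtain ⟨k, hk⟩ := hSrow j
    have h1 : S j k * (u j * u k) ≤ ∑ k', S j k' * (u j * u k') :=
      Finset.single_le_sum
        (fun i _ => mul_nonneg (hS0 j i) (mul_nonneg (hupos j).le (hupos i).le))
        (Finset.mem_univ k)
    have h2 : (∑ k', S j k' * (u j * u k')) ≤ Q u :=
      Finset.single_le_sum
        (fun i _ => Finset.sum_nonneg fun i' _ =>
          mul_nonneg (hS0 i i') (mul_nonneg (hupos i).le (hupos i').le))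
        (Finset.mem_univ j)
    have h3 : u j * lo ≤ S j k * (u j * u k) := by
      calc u j * lo = 1 * (u j * lo) := by ring
        _ ≤ S j k * (u j * u k) := by
            apply mul_le_mul hk
            · exact mul_le_mul_of_nonneg_left (huB k) (hupos j).le
            · exact mul_nonneg (hupos j).le hlopos.le
            · linarith
    have h4 : u j * lo ≤ Qbar := le_trans h3 (le_trans h1 (le_trans h2 huQ))
    have h5 : lo * (n:ℝ) ^ δ = 1 := by
      rw [hlo, ← Real.rpow_add hncast]
      simp
    calc u j = u j * lo * (n:ℝ) ^ δ := by
          rw [mul_assoc, h5, mul_one]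
      _ ≤ Qbar * (n:ℝ) ^ δ :=
          mul_le_mul_of_nonneg_right h4 (Real.rpow_nonneg hncast.le δ)
  have hAcomp : IsCompact A := isCompact_Icc.of_isClosed_subset hAclosed hAsub
  have hone : (fun _ => (1:ℝ)) ∈ A := by
    refine ⟨⟨fun j => ?_, ?_⟩, ?_⟩
    · exact Real.rpow_le_one_of_one_le_of_nonpos
        (by exact_mod_cast (by omega : 1 ≤ n)) (by linarith)
    · show φc (fun _ => 1) = (n : ℝ)
      simp [hφc, Real.one_rpow]
    · show Q (fun _ => 1) ≤ Qbar
      simp [hQdef, hQbar]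
  obtain ⟨u₀, hu₀A, hu₀min⟩ := hAcomp.exists_isMinOn ⟨_, hone⟩ hQcont.continuousOn
  obtain ⟨⟨hu₀B, hu₀φ⟩, hu₀Q⟩ := hu₀A
  have hu₀pos : ∀ j, 0 < u₀ j := fun j => lt_of_lt_of_le hlopos (hu₀B j)
  have hu₀c : φc u₀ = (n : ℝ) := hu₀φ
  -- local extremum on the constraint surface
  have hextr : IsLocalExtrOn Q {u | φc u = φc u₀} u₀ := by
    left
    have hUopen : IsOpen {u : Fin n → ℝ | ∀ j, 0 < u j} := by
      have : {u : Fin n → ℝ | ∀ j, 0 < u j} = ⋂ j, {u : Fin n → ℝ | 0 < u j} := by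
        ext u; simp [Set.mem_iInter]
      rw [this]
      exact isOpen_iInter_of_finite fun j => isOpen_lt continuous_const (continuous_apply j)
    have hU : {u : Fin n → ℝ | ∀ j, 0 < u j} ∈ nhds u₀ := hUopen.mem_nhds hu₀pos
    filter_upwards [mem_nhdsWithin_of_mem_nhds hU, self_mem_nhdsWithin] with u hupos hus
    by_cases hq : Q u ≤ Qbar
    · have huφ : φc u = (n : ℝ) := by
        rw [show φc u = φc u₀ from hus, hu₀c]
      exact isMinOn_iff.mp hu₀min u ⟨⟨hconstr_lo u hupos huφ, huφ⟩, hq⟩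
    · push_neg at hq
      exact le_of_lt (lt_of_le_of_lt (hu₀Q : Q u₀ ≤ Qbar) hq)
  -- derivatives
  have hφ' : HasStrictFDerivAt φc
      (∑ j : Fin n, (e * u₀ j ^ (e - 1)) •
        (ContinuousLinearMap.proj j : (Fin n → ℝ) →L[ℝ] ℝ)) u₀ := by
    apply HasStrictFDerivAt.fun_sum
    intro j _
    exact (ContinuousLinearMap.proj j :
      (Fin n → ℝ) →L[ℝ] ℝ).hasStrictFDerivAt.rpow_const (Or.inl (hu₀pos j).ne')
  have hQ' : HasStrictFDerivAt Q
      (∑ j : Fin n, ∑ k : Fin n, S j k •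
        (u₀ j • (ContinuousLinearMap.proj k : (Fin n → ℝ) →L[ℝ] ℝ) +
         u₀ k • (ContinuousLinearMap.proj j : (Fin n → ℝ) →L[ℝ] ℝ))) u₀ := by
    apply HasStrictFDerivAt.fun_sum
    intro j _
    apply HasStrictFDerivAt.fun_sum
    intro k _
    exact ((ContinuousLinearMap.proj j :
      (Fin n → ℝ) →L[ℝ] ℝ).hasStrictFDerivAt.mul
      (ContinuousLinearMap.proj k :
        (Fin n → ℝ) →L[ℝ] ℝ).hasStrictFDerivAt).const_mul (S j k)
  obtain ⟨a, b, hab, hmul⟩ := hextr.exists_multipliers_of_hasStrictFDerivAt_1d hφ' hQ'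
  set L : Fin n → ℝ := fun m => ∑ k, S m k * u₀ k with hL
  have hLpos : ∀ m, 0 < L m := by
    intro m
    obtain ⟨k, hk⟩ := hSrow m
    refine Finset.sum_pos' (fun i _ => mul_nonneg (hS0 m i) (hu₀pos i).le)
      ⟨k, Finset.mem_univ k, ?_⟩
    exact mul_pos (lt_of_lt_of_le one_pos hk) (hu₀pos k)
  -- evaluate the multiplier identity at basis vectors
  have hmeval : ∀ m, a * (e * u₀ m ^ (e - 1)) + b * (2 * L m) = 0 := by
    intro m
    have h := DFunLike.congr_fun hmul (Pi.single m (1:ℝ))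
    simp only [ContinuousLinearMap.add_apply, ContinuousLinearMap.coe_smul',
      Pi.smul_apply, ContinuousLinearMap.coe_sum', Finset.sum_apply,
      ContinuousLinearMap.smul_apply, ContinuousLinearMap.proj_apply,
      ContinuousLinearMap.zero_apply, smul_eq_mul, Pi.single_apply,
      mul_ite, mul_one, mul_zero, Finset.sum_ite_eq', Finset.mem_univ, if_true,
      Finset.sum_add_distrib] at h
    have hsum : ∑ x : Fin n, ∑ x1 : Fin n,
        S x x1 * ((if x1 = m then u₀ x else 0) + if x = m then u₀ x1 else 0) = 2 * L m := by
      have h1 : ∀ x : Fin n, ∑ x1, S x x1 * ((if x1 = m then u₀ x else 0) +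
          if x = m then u₀ x1 else 0) = S x m * u₀ x + (if x = m then L x else 0) := by
        intro x
        rw [Finset.sum_congr rfl (fun x1 _ => mul_add (S x x1) _ _), Finset.sum_add_distrib]
        congr 1
        · simp [mul_ite, Finset.sum_ite_eq']
        · by_cases hx : x = m
          · subst hx; simp [hL]
          · simp [hx]
      rw [Finset.sum_congr rfl (fun x _ => h1 x), Finset.sum_add_distrib]
      have h2 : ∑ x, S x m * u₀ x = L m := by
        rw [hL]; exact Finset.sum_congr rfl fun x _ => by rw [hSsymm]
      have h3 : (∑ x, if x = m then L x else 0) = L m := by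
        simp [Finset.sum_ite_eq']
      rw [h2, h3]; ring
    rw [hsum] at h
    exact h
  -- b ≠ 0, extract the multiplier
  have hb : b ≠ 0 := by
    intro hb0
    have hX : e * u₀ ⟨0, by omega⟩ ^ (e - 1) ≠ 0 :=
      mul_ne_zero (ne_of_lt he0) (Real.rpow_pos_of_pos (hu₀pos _) _).ne'
    have ha0 : a = 0 := by
      have hm := hmeval ⟨0, by omega⟩
      rw [hb0] at hm
      have h' : a * (e * u₀ ⟨0, by omega⟩ ^ (e - 1)) = 0 := by linarith
      exact (mul_eq_zero.mp h').resolve_right hX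
    exact hab (by simp [ha0, hb0])
  set c₀ : ℝ := -(a * e) / (2 * b) with hc₀def
  have hLm : ∀ m, L m = c₀ * u₀ m ^ (e - 1) := by
    intro m
    have hm := hmeval m
    have h' : (2 * b) * L m = -(a * e) * u₀ m ^ (e - 1) := by linear_combination hm
    rw [hc₀def, div_mul_eq_mul_div, eq_div_iff (mul_ne_zero two_ne_zero hb)]
    linear_combination h'
  have hc₀pos : 0 < c₀ := by
    by_contra hc
    push_neg at hc
    have hX : 0 < u₀ ⟨0, by omega⟩ ^ (e - 1) := Real.rpow_pos_of_pos (hu₀pos _) _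
    have h1 : 0 ≤ (-c₀) * (u₀ ⟨0, by omega⟩ ^ (e - 1)) :=
      mul_nonneg (neg_nonneg.mpr hc) hX.le
    rw [neg_mul] at h1
    have h2 : 0 < c₀ * (u₀ ⟨0, by omega⟩ ^ (e - 1)) := (hLm _) ▸ hLpos ⟨0, by omega⟩
    linarith
  -- the unnormalized equilibrium price
  set p₀ : Fin n → ℝ := fun m => u₀ m ^ e with hp₀
  have hp₀pos : ∀ m, 0 < p₀ m := fun m => Real.rpow_pos_of_pos (hu₀pos m) e
  have hp₀pow : ∀ m, p₀ m ^ (1 + δ) = u₀ m ^ (e - 1) := by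
    intro m
    simp only [hp₀]
    rw [← Real.rpow_mul (hu₀pos m).le]
    congr 1
    rw [he]; field_simp; ring
  have hPp₀ : ∀ m, ψ m * P m p₀ = L m := by
    intro m
    rw [hP, Finset.mul_sum, hL]
    refine Finset.sum_congr rfl fun k _ => ?_
    have hpk : p₀ k ^ δ = (u₀ k)⁻¹ := by
      simp only [hp₀]
      rw [← Real.rpow_mul (hu₀pos k).le,
        show e * δ = -1 by rw [he]; field_simp, Real.rpow_neg_one]
    rw [hpk, hS, div_eq_mul_inv, inv_inv]
    ring
  -- normalize to geometric mean one
  have hgmp₀pos : 0 < gm p₀ := hgm_pos p₀ hp₀pos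
  set t : ℝ := (gm p₀)⁻¹ with ht
  have htpos : 0 < t := inv_pos.mpr hgmp₀pos
  set p : Fin n → ℝ := fun m => t * p₀ m with hpdef
  have hppos : ∀ m, 0 < p m := fun m => mul_pos htpos (hp₀pos m)
  have hpgm : gm p = 1 := by
    rw [hpdef, hgm_mul t htpos.le p₀ (fun i => (hp₀pos i).le), ht,
      inv_mul_cancel₀ hgmp₀pos.ne']
  have hPscale : ∀ m, P m p = t ^ (-δ) * P m p₀ := by
    intro m
    rw [hP, hP, Finset.mul_sum]
    refine Finset.sum_congr rfl fun k _ => ?_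
    simp only [hpdef]
    rw [Real.mul_rpow htpos.le (hp₀pos k).le, Real.rpow_neg htpos.le]
    have h1 : t ^ δ ≠ 0 := (Real.rpow_pos_of_pos htpos δ).ne'
    have h2 : p₀ k ^ δ ≠ 0 := (Real.rpow_pos_of_pos (hp₀pos k) δ).ne'
    field_simp
  have hkey : ∀ m, ψ m * P m p = (c₀ * t ^ (-δ) * t ^ (-(1 + δ))) * p m ^ (1 + δ) := by
    intro m
    have h1 : ψ m * P m p = t ^ (-δ) * (c₀ * p₀ m ^ (1 + δ)) := by
      rw [hPscale m, show ψ m * (t ^ (-δ) * P m p₀) = t ^ (-δ) * (ψ m * P m p₀) from by ring,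
        hPp₀ m, hLm m, ← hp₀pow m]
    have h2 : p₀ m ^ (1 + δ) = t ^ (-(1 + δ)) * p m ^ (1 + δ) := by
      simp only [hpdef]
      rw [Real.mul_rpow htpos.le (hp₀pos m).le, Real.rpow_neg htpos.le]
      field_simp [(Real.rpow_pos_of_pos htpos (1 + δ)).ne']
    rw [h1, h2]; ring
  set c₁ : ℝ := c₀ * t ^ (-δ) * t ^ (-(1 + δ)) with hc₁def
  have hc₁pos : 0 < c₁ :=
    mul_pos (mul_pos hc₀pos (Real.rpow_pos_of_pos htpos _)) (Real.rpow_pos_of_pos htpos _)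
  have hpinv : ∀ m, p m ^ (1 + δ) = c₁⁻¹ * (ψ m * P m p) := by
    intro m
    rw [hkey m, inv_mul_cancel_left₀ hc₁pos.ne']
  -- p lies in K
  have hratioP : Finset.univ.sup' hne p / Finset.univ.inf' hne p ≤ γ * ψt := by
    have hcore := hratio_core p p c₁⁻¹ (inv_pos.mpr hc₁pos) hppos hppos hpinv
    have hs : 0 < Finset.univ.sup' hne p / Finset.univ.inf' hne p :=
      div_pos (hsuppos p hppos) (hinfpos p hppos)
    rw [Real.rpow_add hs, Real.rpow_one] at hcore
    exact (mul_le_mul_iff_of_pos_right (Real.rpow_pos_of_pos hs δ)).mp hcore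
  have hpK : p ∈ K := by
    rw [hK]
    exact ⟨hppos, hpgm, hratioP⟩
  -- fixed point property
  set c₂ : ℝ := c₁ ^ (1 / (1 + δ)) with hc₂def
  have hc₂pos : 0 < c₂ := Real.rpow_pos_of_pos hc₁pos _
  have hf0p : f0 p = fun m => c₂ * p m := by
    funext m
    rw [hf0, hpgm, Real.one_rpow, one_mul, hkey m,
      Real.mul_rpow hc₁pos.le (Real.rpow_nonneg (hppos m).le _)]
    congr 1
    rw [← Real.rpow_mul (hppos m).le,
      show (1 + δ) * (1 / (1 + δ)) = 1 from by field_simp, Real.rpow_one]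
  have hgmf0 : gm (f0 p) = c₂ := by
    rw [hf0p, hgm_mul c₂ hc₂pos.le p (fun i => (hppos i).le), hpgm, mul_one]
  have hfp : f p = p := by
    funext m
    rw [hf, hgmf0, hf0p]
    exact mul_div_cancel_left₀ _ hc₂pos.ne'
  refine ⟨p, hpK, hfp, ?_⟩
  have hcomp : ∀ i j, p i ^ (1 + δ) * C i j / P i p = c₁⁻¹ * (ψ i * C i j) := by
    intro i j
    rw [hpinv i]
    field_simp [(hPpos p hppos i).ne']
  intro i j
  rw [hcomp i j, hcomp j i, hψid]
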